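/- arXiv:2004.06581 — 2 statements merged into one kernel-verified Lean document; each statement's English description precedes it below -/
import Mathlib

section
/- Let A be a WFA over ℚ, α ∈ ℚ, and k ≥ 1. Let B be a WFA such that W_B(w) = (W_A(w) + 1 − α)(1 + α − W_A(w)) for all w ∈ Σ*. Then there exists a word w ∈ Σ^{≤k} with W_B(w) ≥ 1 if and only if there exists a word w ∈ Σ^{≤k} with W_A(w) = α. -/
def wordMatrix {n σ : Type*} [Fintype n] [DecidableEq n]
    (M : σ → Matrix n n ℚ) (w : List σ) : Matrix n n ℚ :=
  (w.map M).prod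

def weight {n σ : Type*} [Fintype n] [DecidableEq n]
    (i f : n → ℚ) (M : σ → Matrix n n ℚ) (w : List σ) : ℚ :=
  dotProduct i (Matrix.mulVec (wordMatrix M w) f)

/-- if `W_B(w) = (W_A(w) + 1 − α)(1 + α − W_A(w))` for every word,
then some word of length in `[1,k]` has `W_B`-weight `≥ 1` iff some word of
length in `[1,k]` has `W_A`-weight exactly `α`. -/
theorem berp_to_btrp {n₁ n₂ σ : Type*} [Fintype n₁] [DecidableEq n₁]
    [Fintype n₂] [DecidableEq n₂]
    (iA fA : n₁ → ℚ) (MA : σ → Matrix n₁ n₁ ℚ)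
    (iB fB : n₂ → ℚ) (MB : σ → Matrix n₂ n₂ ℚ)
    (α : ℚ) (k : ℕ) (hk : 1 ≤ k)
    (hB : ∀ w : List σ,
      weight iB fB MB w
        = (weight iA fA MA w + 1 - α) * (1 + α - weight iA fA MA w)) :
    (∃ w : List σ, 1 ≤ w.length ∧ w.length ≤ k ∧ 1 ≤ weight iB fB MB w) ↔
    (∃ w : List σ, 1 ≤ w.length ∧ w.length ≤ k ∧ weight iA fA MA w = α) := by
  constructor
  · rintro ⟨w, h1, h2, h3⟩
    refine ⟨w, h1, h2, ?_⟩
    rw [hB w] at h3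
    nlinarith [sq_nonneg (weight iA fA MA w - α)]
  · rintro ⟨w, h1, h2, h3⟩
    refine ⟨w, h1, h2, ?_⟩
    rw [hB w, h3]
    ring_nf
    norm_num
end

section
/- Let G = (V,E) be a simple directed graph, n = |V|, μ : V → {first n primes} an injection, and let A be the WFA with states V, alphabet {ℓ_{uv} | (u,v) ∈ E}, transition matrix M_{ℓ_{uv}} having entry μ(v) at position (u,v) and 0 elsewhere, and all-ones initial and final vectors. If G has a Hamiltonian cycle e_1⋯e_n, then the word ℓ_{e_1}⋯ℓ_{e_n} (the labels of the cycle's edges in order) has weight exactly p_n# in A. -/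
lemma prod_std_chain {V : Type*} [Fintype V] [DecidableEq V]
    (c : V × V → ℚ) : ∀ (L : List (V × V)) (p : V × V),
    List.Chain (fun a b => a.2 = b.1) p L →
    ((p :: L).map (fun q => Matrix.single q.1 q.2 (c q))).prod
      = Matrix.single p.1 ((p :: L).getLast (by simp)).2
          (((p :: L).map c).prod) := by
  intro L
  induction L with
  | nil => intro p _; simp
  | cons q L' ih =>
    intro p hchain
    rw [List.Chain, List.isChain_cons_cons] at hchain
    obtain ⟨h1, h2⟩ := hchain
    conv_rhs => rw [List.getLast_cons (by simp : q :: L' ≠ [])]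
    rw [List.map_cons, List.prod_cons, ih q h2, h1, Matrix.single_mul_single_same]
    simp [mul_assoc]

lemma dot_one_std {V : Type*} [Fintype V] [DecidableEq V] (i j : V) (a : ℚ) :
    dotProduct (fun _ => (1:ℚ))
      (Matrix.mulVec (Matrix.single i j a) (fun _ => 1)) = a := by
  simp [dotProduct, Matrix.mulVec, Matrix.single, ite_and]



/-- in the WFA whose states are the vertices, whose alphabet is
the edge set, whose transition matrix for edge `(u,v)` has the single nonzero
entry `μ(v)` at position `(u,v)`, and whose initial and final vectors are
all-ones, the word labeling a Hamiltonian cycle has weight exactly the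
primorial `p_n#` (the product of the first `n = |V|` primes). -/
theorem hamiltonian_cycle_word_weight
    {V : Type*} [Fintype V] [DecidableEq V]
    (E : V → V → Prop)
    (μ : V → ℕ) (hμ_inj : Function.Injective μ)
    (hμ_range : ∀ v, ∃ j < Fintype.card V, μ v = Nat.nth Nat.Prime j)
    (hn : 0 < Fintype.card V)
    (e : Fin (Fintype.card V) → {p : V × V // E p.1 p.2})
    (hpath : ∀ j : Fin (Fintype.card V), ∀ h : j.val + 1 < Fintype.card V,
      ((e j).val).2 = ((e ⟨j.val + 1, h⟩).val).1)
    (hclose : ((e ⟨Fintype.card V - 1, by omega⟩).val).2 = ((e ⟨0, hn⟩).val).1)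
    (hham : Function.Bijective (fun j => ((e j).val).2)) :
    weight (fun _ : V => (1 : ℚ)) (fun _ : V => (1 : ℚ))
        (fun a : {p : V × V // E p.1 p.2} =>
          Matrix.single a.val.1 a.val.2 ((μ a.val.2 : ℚ)))
        (List.ofFn e)
      = ∏ j ∈ Finset.range (Fintype.card V), (Nat.nth Nat.Prime j : ℚ) := by
  classical
  set L : List (V × V) := List.ofFn (fun j => (e j).val) with hLdef
  have hlen : L.length = Fintype.card V := by simp [hLdef]
  have hLne : L ≠ [] := by
    intro h; rw [h] at hlen; simp at hlen; omega
  set c : V × V → ℚ := fun q => (μ q.2 : ℚ) with hc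
  have hchain0 : List.Chain' (fun a b : V × V => a.2 = b.1)
      (List.ofFn (fun j => (e j).val)) := by
    rw [List.Chain', List.isChain_iff_getElem]
    intro i h
    simp only [List.length_ofFn] at h
    simp only [List.getElem_ofFn]
    have := hpath ⟨i, by omega⟩ (by show i + 1 < Fintype.card V; omega)
    convert this using 2 <;> simp
  have hchain' : List.Chain' (fun a b : V × V => a.2 = b.1) L := hLdef ▸ hchain0
  obtain ⟨p, t, hpt⟩ := List.exists_cons_of_ne_nil hLne
  have hchain : List.Chain (fun a b : V × V => a.2 = b.1) p t := by
    rw [hpt] at hchain'; exact hchain'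
  have hmap : (List.ofFn e).map
      (fun a : {p : V × V // E p.1 p.2} =>
        Matrix.single a.val.1 a.val.2 ((μ a.val.2 : ℚ)))
      = L.map (fun q => Matrix.single q.1 q.2 (c q)) := by
    simp only [hLdef, List.map_ofFn]; rfl
  have hw : weight (fun _ : V => (1 : ℚ)) (fun _ : V => (1 : ℚ))
        (fun a : {p : V × V // E p.1 p.2} =>
          Matrix.single a.val.1 a.val.2 ((μ a.val.2 : ℚ)))
        (List.ofFn e) = ((p :: t).map c).prod := by
    rw [weight, wordMatrix, hmap, hpt, prod_std_chain c t p hchain, dot_one_std]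
  rw [hw, ← hpt]
  have hLc : (L.map c).prod = ∏ j : Fin (Fintype.card V), (μ ((e j).val.2) : ℚ) := by
    simp only [hLdef, List.map_ofFn, List.prod_ofFn]; rfl
  rw [hLc]
  -- bijection argument
  choose idx hidx hval using fun j : Fin (Fintype.card V) => hμ_range ((e j).val.2)
  set g : Fin (Fintype.card V) → Fin (Fintype.card V) := fun j => ⟨idx j, hidx j⟩ with hg
  have hginj : Function.Injective g := by
    intro j k h
    have h2 : Nat.nth Nat.Prime (idx j) = Nat.nth Nat.Prime (idx k) := by
      have : idx j = idx k := by simpa [hg, Fin.ext_iff] using h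
      rw [this]
    have h3 : μ ((e j).val.2) = μ ((e k).val.2) := by rw [hval j, hval k, h2]
    exact hham.injective (hμ_inj h3)
  have hgbij : Function.Bijective g := (Finite.injective_iff_bijective).mp hginj
  calc ∏ j : Fin (Fintype.card V), (μ ((e j).val.2) : ℚ)
      = ∏ j : Fin (Fintype.card V), (Nat.nth Nat.Prime (g j) : ℚ) := by
        apply Finset.prod_congr rfl; intro j _; rw [hval j]
    _ = ∏ k : Fin (Fintype.card V), (Nat.nth Nat.Prime k : ℚ) :=
        Fintype.prod_bijective g hgbij _ _ (fun j => rfl)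
    _ = ∏ j ∈ Finset.range (Fintype.card V), (Nat.nth Nat.Prime j : ℚ) :=
        Fin.prod_univ_eq_prod_range (fun k => (Nat.nth Nat.Prime k : ℚ)) (Fintype.card V)
end
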